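/- Let S be a Lie algebra over a field K and V a Lie module over S that is semisimple (a direct sum of irreducible Lie submodules). Let V^S = {v ∈ V : s • v = 0 for all s ∈ S} and let S·V be the K-span of all elements s • v with s ∈ S, v ∈ V. Then V is the internal direct sum of the Lie submodules V^S and S·V, i.e. V = V^S ⊕ S·V. -/

import Mathlib

/-- Let `S` be a Lie algebra over a field `K` and `V` a semisimple Lie module over `S`
(every Lie submodule has a complement).  Let `V^S` be the submodule of invariants and
`S·V` the span of all `⁅s, v⁆`.  Then `V = V^S ⊕ S·V` as an internal direct sum. -/
theorem semisimple_module_eq_invariants_sup_span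
    {K S V : Type*} [Field K] [LieRing S] [LieAlgebra K S]
    [AddCommGroup V] [Module K V] [LieRingModule S V] [LieModule K S V]
    (hss : ∀ W : LieSubmodule K S V, ∃ W' : LieSubmodule K S V, IsCompl W W') :
    IsCompl (LieModule.maxTrivSubmodule K S V).toSubmodule
      (Submodule.span K {z : V | ∃ (s : S) (v : V), z = ⁅s, v⁆}) := by
  set gen : Set V := {z : V | ∃ (s : S) (v : V), z = ⁅s, v⁆} with hgen
  have hlie : ∀ (s : S) (x : V), x ∈ Submodule.span K gen → ⁅s, x⁆ ∈ Submodule.span K gen := by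
    intro s x hx
    induction hx using Submodule.span_induction with
    | mem z hz => exact Submodule.subset_span ⟨s, z, rfl⟩
    | zero => rw [lie_zero]; exact Submodule.zero_mem _
    | add a b _ _ ha hb => rw [lie_add]; exact Submodule.add_mem _ ha hb
    | smul c a _ ha => rw [lie_smul]; exact Submodule.smul_mem _ c ha
  set C : LieSubmodule K S V :=
    { Submodule.span K gen with
      lie_mem := fun {s x} hx => hlie s x hx } with hC
  set T : LieSubmodule K S V := LieModule.maxTrivSubmodule K S V with hT
  have hCgen : ∀ s : S, ∀ v : V, ⁅s, v⁆ ∈ C := fun s v => Submodule.subset_span ⟨s, v, rfl⟩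
  -- codisjoint
  have hcod : T ⊔ C = ⊤ := by
    obtain ⟨W, hW⟩ := hss C
    have hWT : W ≤ T := by
      intro w hw
      rw [hT, LieModule.mem_maxTrivSubmodule]
      intro s
      have h1 : ⁅s, w⁆ ∈ C ⊓ W := ⟨hCgen s w, W.lie_mem hw⟩
      have h2 := hW.disjoint.le_bot h1
      rwa [LieSubmodule.mem_bot] at h2
    have : (⊤ : LieSubmodule K S V) ≤ T ⊔ C := by
      rw [← hW.codisjoint.eq_top]
      exact sup_le (le_sup_right) (hWT.trans le_sup_left)
    exact le_antisymm le_top this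
  -- disjoint
  have hdis : T ⊓ C = ⊥ := by
    obtain ⟨D, hD⟩ := hss (T ⊓ C)
    have hCD : C ≤ D := by
      intro x hx
      have hx' : x ∈ Submodule.span K gen := hx
      clear hx
      induction hx' using Submodule.span_induction with
      | mem z hz =>
        obtain ⟨s, v, rfl⟩ := hz
        have hv : v ∈ (T ⊓ C) ⊔ D := by rw [hD.codisjoint.eq_top]; trivial
        obtain ⟨a, ha, d, hd, rfl⟩ := (LieSubmodule.mem_sup _ _ _).mp hv
        have ha0 : ⁅s, a⁆ = 0 := ha.1 s
        rw [lie_add, ha0, zero_add]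
        exact D.lie_mem hd
      | zero => exact D.zero_mem
      | add a b _ _ ha hb => exact D.add_mem ha hb
      | smul c a _ ha => exact D.smul_mem c ha
    have h1 : T ⊓ C ≤ (T ⊓ C) ⊓ D := le_inf le_rfl (inf_le_right.trans hCD)
    exact le_antisymm (h1.trans hD.disjoint.le_bot) bot_le
  constructor
  · rw [disjoint_iff]
    have : (↑(T ⊓ C) : Submodule K V) = ↑(⊥ : LieSubmodule K S V) := by rw [hdis]
    rwa [LieSubmodule.inf_toSubmodule, LieSubmodule.bot_toSubmodule] at this
  · rw [codisjoint_iff]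
    have : (↑(T ⊔ C) : Submodule K V) = ↑(⊤ : LieSubmodule K S V) := by rw [hcod]
    rwa [LieSubmodule.sup_toSubmodule, LieSubmodule.top_toSubmodule] at this
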